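/- In the tree J_3^*, let w_k(h) denote the number of walks of length k starting at vertex h. Then: w_1 attains its maximum value 6 uniquely at the vertex x_1 (i.e., w_1(x_1) = 6 and w_1(h) < 6 for every other vertex h); w_2 attains its maximum value 18 uniquely at y_1; and w_3 attains its maximum value 46 uniquely at z_1. -/

import Mathlib

/-!
STATEMENT 8: In the tree `J₃*`, the number of length-1 walks is uniquely maximised
(with value 6) at `x₁`, the number of length-2 walks is uniquely maximised (with
value 18) at `y₁`, and the number of length-3 walks is uniquely maximised (with
value 46) at `z₁`.
-/

/-- The vertex set of the tree `J₃*`. -/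
inductive JStarVert : Type
  | w : JStarVert
  | x0 : JStarVert
  | x1 : JStarVert
  | x2 (i : Fin 5) : JStarVert
  | y0 : JStarVert
  | y1 : JStarVert
  | y2 (i : Fin 4) : JStarVert
  | y3 (i : Fin 4) (j : Fin 3) : JStarVert
  | z0 : JStarVert
  | z1 : JStarVert
  | z2 (i : Fin 3) : JStarVert
  | z3 (i : Fin 3) (j : Fin 3) : JStarVert
  | z4 (i : Fin 3) (j : Fin 3) (k : Fin 2) : JStarVert

/-- The tree `J₃*`. -/
def JStar : SimpleGraph JStarVert :=
  SimpleGraph.fromRel (fun a b =>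
    (a = JStarVert.w ∧ b = JStarVert.x0) ∨
    (a = JStarVert.w ∧ b = JStarVert.y0) ∨
    (a = JStarVert.w ∧ b = JStarVert.z0) ∨
    (a = JStarVert.x0 ∧ b = JStarVert.x1) ∨
    (a = JStarVert.y0 ∧ b = JStarVert.y1) ∨
    (a = JStarVert.z0 ∧ b = JStarVert.z1) ∨
    (∃ i, a = JStarVert.x1 ∧ b = JStarVert.x2 i) ∨
    (∃ i, a = JStarVert.y1 ∧ b = JStarVert.y2 i) ∨
    (∃ i j, a = JStarVert.y2 i ∧ b = JStarVert.y3 i j) ∨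
    (∃ i, a = JStarVert.z1 ∧ b = JStarVert.z2 i) ∨
    (∃ i j, a = JStarVert.z2 i ∧ b = JStarVert.z3 i j) ∨
    (∃ i j k, a = JStarVert.z3 i j ∧ b = JStarVert.z4 i j k))

/-- The number of walks of length `k` in `J₃*` starting at the vertex `h`. -/
noncomputable def numWalksJStar (k : ℕ) (h : JStarVert) : ℕ :=
  Nat.card {p : Σ v : JStarVert, JStar.Walk h v // p.2.length = k}

deriving instance DecidableEq for JStarVert
deriving instance Fintype for JStarVert

/-- Explicit neighbour lists in `J₃*`. -/
def nbrs : JStarVert → List JStarVert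
  | .w => [.x0, .y0, .z0]
  | .x0 => [.w, .x1]
  | .x1 => [.x0, .x2 0, .x2 1, .x2 2, .x2 3, .x2 4]
  | .x2 _ => [.x1]
  | .y0 => [.w, .y1]
  | .y1 => [.y0, .y2 0, .y2 1, .y2 2, .y2 3]
  | .y2 i => [.y1, .y3 i 0, .y3 i 1, .y3 i 2]
  | .y3 i _ => [.y2 i]
  | .z0 => [.w, .z1]
  | .z1 => [.z0, .z2 0, .z2 1, .z2 2]
  | .z2 i => [.z1, .z3 i 0, .z3 i 1, .z3 i 2]
  | .z3 i j => [.z2 i, .z4 i j 0, .z4 i j 1]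
  | .z4 i j _ => [.z3 i j]

set_option maxHeartbeats 1000000 in
set_option linter.unusedTactic false in
lemma adj_iff (a b : JStarVert) : JStar.Adj a b ↔ b ∈ nbrs a := by
  rw [JStar, SimpleGraph.fromRel_adj]
  cases a <;> cases b <;> simp [nbrs] <;>
    first
      | decide
      | (rename_i u1; revert u1; decide)
      | (rename_i u1 u2; revert u1 u2; decide)
      | (rename_i u1 u2 u3; revert u1 u2 u3; decide)
      | (rename_i u1 u2 u3 u4; revert u1 u2 u3 u4; decide)
      | (rename_i u1 u2 u3 u4 u5; revert u1 u2 u3 u4 u5; decide)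

instance fastAdjDec : DecidableRel JStar.Adj := fun a b =>
  decidable_of_iff _ (adj_iff a b).symm

/-- Computable walk counts via the standard recursion. -/
def wcount : ℕ → JStarVert → ℕ
  | 0, _ => 1
  | k + 1, h => ∑ v ∈ JStar.neighborFinset h, wcount k v

lemma rowSum_eq (k : ℕ) (h : JStarVert) :
    ∑ v, (JStar.adjMatrix ℕ ^ k) h v = wcount k h := by
  induction k generalizing h with
  | zero => simp [wcount, Matrix.one_apply]
  | succ k ih =>
    rw [pow_succ']
    simp only [SimpleGraph.adjMatrix_mul_apply]
    rw [Finset.sum_comm]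
    simp only [ih]
    rfl

lemma numWalks_eq_wcount (k : ℕ) (h : JStarVert) : numWalksJStar k h = wcount k h := by
  have e : {p : Σ v : JStarVert, JStar.Walk h v // p.2.length = k} ≃
      Σ v : JStarVert, {p : JStar.Walk h v // p.length = k} :=
    { toFun := fun p => ⟨p.1.1, p.1.2, p.2⟩
      invFun := fun q => ⟨⟨q.1, q.2.1⟩, q.2.2⟩
      left_inv := fun _ => rfl
      right_inv := fun _ => rfl }
  rw [numWalksJStar, Nat.card_congr e, Nat.card_eq_fintype_card, Fintype.card_sigma,
    ← rowSum_eq k h]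
  refine Finset.sum_congr rfl fun v _ => ?_
  have := JStar.adjMatrix_pow_apply_eq_card_walk (α := ℕ) k h v
  rw [this, Nat.cast_id]
  exact Fintype.card_congr (Equiv.refl _)

/-- Fast walk-count recursion via explicit neighbour lists. -/
def g : ℕ → JStarVert → ℕ
  | 0, _ => 1
  | k + 1, h => ((nbrs h).map (g k)).sum

set_option maxHeartbeats 4000000 in
lemma neighborFinset_eq (h : JStarVert) :
    JStar.neighborFinset h = (nbrs h).toFinset := by
  revert h; decide

lemma nbrs_nodup (h : JStarVert) : (nbrs h).Nodup := by revert h; decide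

lemma wcount_eq_g (k : ℕ) (h : JStarVert) : wcount k h = g k h := by
  induction k generalizing h with
  | zero => rfl
  | succ k ih =>
    show ∑ v ∈ JStar.neighborFinset h, wcount k v = _
    rw [neighborFinset_eq]
    rw [List.sum_toFinset _ (nbrs_nodup h)]
    simp only [ih]
    rfl

set_option maxHeartbeats 4000000 in
theorem stmt8 :
    (numWalksJStar 1 JStarVert.x1 = 6 ∧
      ∀ h : JStarVert, h ≠ JStarVert.x1 → numWalksJStar 1 h < 6) ∧
    (numWalksJStar 2 JStarVert.y1 = 18 ∧
      ∀ h : JStarVert, h ≠ JStarVert.y1 → numWalksJStar 2 h < 18) ∧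
    (numWalksJStar 3 JStarVert.z1 = 46 ∧
      ∀ h : JStarVert, h ≠ JStarVert.z1 → numWalksJStar 3 h < 46) := by
  simp only [numWalks_eq_wcount, wcount_eq_g]
  refine ⟨⟨by decide, by decide⟩, ⟨by decide, by decide⟩, by decide, by decide⟩
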